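/- Let a ∈ ℝ, let n ≥ 2, and let (s_k)_{k≥0} be a real sequence with s_k = a^k for all k ≤ n. Then the n-th Hankel determinant satisfies D_n = (−1)^{n(n+1)/2} (a^{n+1} − s_{n+1})^n. -/

import Mathlib

open Equiv Matrix

/-- The sign of the reversal permutation of `Fin m`. -/
lemma sign_revPerm_aux : ∀ m : ℕ, Equiv.Perm.sign (Fin.revPerm : Equiv.Perm (Fin m)) =
    (-1 : ℤˣ) ^ (m * (m - 1) / 2)
  | 0 => by decide
  | (m + 1) => by
    have hdec : (Fin.revPerm : Equiv.Perm (Fin (m + 1))) =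
        ((finSuccEquivLast.symm).permCongr
          ((Fin.revPerm : Equiv.Perm (Fin m)).optionCongr)) * (finRotate (m + 1))⁻¹ := by
      rw [eq_mul_inv_iff_mul_eq]
      ext x
      induction x using Fin.lastCases with
      | last =>
        simp [Equiv.permCongr_def, finRotate_last, Fin.rev_zero]
      | cast i =>
        simp only [Equiv.Perm.coe_mul, Function.comp_apply, finRotate_succ_apply,
          Fin.revPerm_apply]
        rw [show (Fin.castSucc i) + 1 = i.succ by
          ext; simp [Fin.val_add_one, (Fin.castSucc_lt_last i).ne]]
        simp [Equiv.permCongr_def, Fin.rev_succ]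
    rw [hdec, _root_.map_mul, map_inv, Equiv.Perm.sign_permCongr, Equiv.optionCongr_sign,
      sign_finRotate, sign_revPerm_aux m, ← inv_pow, inv_neg, inv_one, ← pow_add]
    congr 1
    rcases m with _ | m
    · rfl
    · have e1 : (m + 1 + 1) * (m + 1 + 1 - 1) / 2 = (m + 1) * m / 2 + (m + 1) := by
        rw [Nat.add_sub_cancel, show (m + 1 + 1) * (m + 1) = (m + 1) * m + 2 * (m + 1) by ring,
          Nat.add_mul_div_left _ _ (by norm_num : (0 : ℕ) < 2)]
      rw [Nat.add_sub_cancel, e1]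
      omega

/-- If `s k = a^k` for `k ≤ n` (with `n ≥ 2`), then the `n`-th Hankel determinant equals
`(-1)^(n(n+1)/2) (a^(n+1) - s_{n+1})^n`. -/
theorem hankel_det_geometric_start (a : ℝ) (n : ℕ) (hn : 2 ≤ n)
    (s : ℕ → ℝ) (hs : ∀ k ≤ n, s k = a ^ k) :
    (Matrix.of fun i j : Fin (n + 1) => s (i.1 + j.1)).det =
      (-1) ^ (n * (n + 1) / 2) * (a ^ (n + 1) - s (n + 1)) ^ n := by
  set c : ℝ := a ^ (n + 1) - s (n + 1) with hc
  set H : Matrix (Fin (n + 1)) (Fin (n + 1)) ℝ :=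
    Matrix.of fun i j : Fin (n + 1) => s (i.1 + j.1) with hH
  set L : Matrix (Fin (n + 1)) (Fin (n + 1)) ℝ :=
    Matrix.of fun i j : Fin (n + 1) =>
      if (j : ℕ) = i then (1 : ℝ) else if (j : ℕ) + 1 = i then -a else 0 with hL
  -- key summation lemma
  have key : ∀ (v : Fin (n + 1) → ℝ) (i : Fin (n + 1)),
      (∑ k, L i k * v k) =
        v i - (if (i : ℕ) = 0 then 0 else
          a * v ⟨(i : ℕ) - 1, lt_of_le_of_lt (Nat.pred_le _) i.isLt⟩) := by
    intro v i
    have hsplit : ∀ k : Fin (n + 1), L i k * v k =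
        (if k = i then v k else 0) + (if (k : ℕ) + 1 = (i : ℕ) then -a * v k else 0) := by
      intro k
      simp only [hL, Matrix.of_apply]
      by_cases h1 : (k : ℕ) = (i : ℕ)
      · have : k = i := Fin.ext h1
        subst this
        simp
      · have hk : ¬ k = i := fun h => h1 (by rw [h])
        by_cases h2 : (k : ℕ) + 1 = (i : ℕ) <;> simp [h1, h2, hk]
    rw [Finset.sum_congr rfl fun k _ => hsplit k, Finset.sum_add_distrib]
    rw [Finset.sum_ite_eq' Finset.univ i v]
    by_cases hi0 : (i : ℕ) = 0
    · have hnone : ∀ k : Fin (n + 1), ¬ ((k : ℕ) + 1 = (i : ℕ)) := fun k => by omega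
      simp [hnone, hi0]
    · set i' : Fin (n + 1) := ⟨(i : ℕ) - 1, lt_of_le_of_lt (Nat.pred_le _) i.isLt⟩ with hi'
      have hcond : ∀ k : Fin (n + 1), ((k : ℕ) + 1 = (i : ℕ)) ↔ k = i' := by
        intro k
        rw [Fin.ext_iff]
        simp only [hi']
        omega
      simp only [hcond]
      rw [Finset.sum_ite_eq' Finset.univ i' (fun k => -a * v k)]
      simp [hi0, sub_eq_add_neg]
  -- entries of L * H
  have hLH : ∀ i j : Fin (n + 1), (L * H) i j =
      s ((i : ℕ) + j) - (if (i : ℕ) = 0 then 0 else a * s ((i : ℕ) - 1 + j)) := by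
    intro i j
    rw [Matrix.mul_apply]
    simp only [hH, Matrix.of_apply]
    rw [key (fun k => s ((k : ℕ) + j)) i]
  set N : Matrix (Fin (n + 1)) (Fin (n + 1)) ℝ := L * H * Lᵀ with hN
  have hNapp : ∀ i j : Fin (n + 1), N i j =
      (L * H) i j - (if (j : ℕ) = 0 then 0 else
        a * (L * H) i ⟨(j : ℕ) - 1, lt_of_le_of_lt (Nat.pred_le _) j.isLt⟩) := by
    intro i j
    rw [hN, Matrix.mul_apply]
    have hcomm : ∀ k : Fin (n + 1), (L * H) i k * Lᵀ k j = L j k * (L * H) i k := by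
      intro k; rw [Matrix.transpose_apply, mul_comm]
    rw [Finset.sum_congr rfl fun k _ => hcomm k, key (fun k => (L * H) i k) j]
  -- structural facts about N
  have F1 : ∀ i j : Fin (n + 1), 0 < (i : ℕ) + j → (i : ℕ) + j ≤ n → N i j = 0 := by
    intro i j hpos hle
    rw [hNapp i j, hLH i j]
    by_cases hi : (i : ℕ) = 0
    · have hj : ¬ (j : ℕ) = 0 := by omega
      rw [hLH]
      rw [if_pos hi, if_pos hi, if_neg hj, sub_zero, sub_zero]
      set j' : Fin (n + 1) := ⟨(j : ℕ) - 1, lt_of_le_of_lt (Nat.pred_le _) j.isLt⟩ with hj'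
      have hj'v : (j' : ℕ) = (j : ℕ) - 1 := rfl
      rw [hs ((i : ℕ) + j) hle, hs ((i : ℕ) + j') (by rw [hj'v]; omega)]
      rw [hj'v, hi]
      rw [show (0 : ℕ) + (j : ℕ) = (0 + ((j : ℕ) - 1)) + 1 by omega, pow_succ]
      ring
    · by_cases hj : (j : ℕ) = 0
      · rw [if_neg hi, if_pos hj, sub_zero]
        rw [hs ((i : ℕ) + j) hle, hs ((i : ℕ) - 1 + j) (by omega)]
        rw [show (i : ℕ) + (j : ℕ) = ((i : ℕ) - 1 + j) + 1 by omega, pow_succ]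
        ring
      · rw [hLH]
        rw [if_neg hi, if_neg hi, if_neg hj]
        set j' : Fin (n + 1) := ⟨(j : ℕ) - 1, lt_of_le_of_lt (Nat.pred_le _) j.isLt⟩ with hj'
        have hj'v : (j' : ℕ) = (j : ℕ) - 1 := rfl
        rw [hs ((i : ℕ) + j) hle, hs ((i : ℕ) - 1 + j) (by omega),
          hs ((i : ℕ) + j') (by rw [hj'v]; omega), hs ((i : ℕ) - 1 + j') (by rw [hj'v]; omega)]
        rw [hj'v]
        rw [show (i : ℕ) + (j : ℕ) = ((i : ℕ) - 1 + ((j : ℕ) - 1)) + 1 + 1 by omega,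
          show (i : ℕ) - 1 + (j : ℕ) = ((i : ℕ) - 1 + ((j : ℕ) - 1)) + 1 by omega,
          show (i : ℕ) + ((j : ℕ) - 1) = ((i : ℕ) - 1 + ((j : ℕ) - 1)) + 1 by omega]
        rw [pow_succ, pow_succ]
        ring
  have F2 : N 0 0 = 1 := by
    rw [hNapp 0 0, hLH 0 0]
    simp [hs 0 (by omega)]
  have F3 : ∀ i j : Fin (n + 1), (i : ℕ) + j = n + 1 → N i j = -c := by
    intro i j hij
    have hi : ¬ (i : ℕ) = 0 := by have := j.isLt; omega
    have hj : ¬ (j : ℕ) = 0 := by have := i.isLt; omega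
    rw [hNapp i j, hLH i j, hLH]
    rw [if_neg hi, if_neg hi, if_neg hj]
    set j' : Fin (n + 1) := ⟨(j : ℕ) - 1, lt_of_le_of_lt (Nat.pred_le _) j.isLt⟩ with hj'
    have hj'v : (j' : ℕ) = (j : ℕ) - 1 := rfl
    rw [hs ((i : ℕ) - 1 + j) (by omega), hs ((i : ℕ) + j') (by rw [hj'v]; omega),
      hs ((i : ℕ) - 1 + j') (by rw [hj'v]; omega)]
    rw [hj'v]
    rw [show (i : ℕ) + (j : ℕ) = n + 1 from hij,
      show (i : ℕ) - 1 + (j : ℕ) = n by omega,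
      show (i : ℕ) + ((j : ℕ) - 1) = n by omega,
      show (i : ℕ) - 1 + ((j : ℕ) - 1) = n - 1 by omega]
    have h1 : a * a ^ n = a ^ (n + 1) := by rw [pow_succ]; ring
    have h2 : a * (a * a ^ (n - 1)) = a ^ (n + 1) := by
      rw [show a * (a * a ^ (n - 1)) = a ^ 2 * a ^ (n - 1) by ring, ← pow_add]
      congr 1
      omega
    rw [hc]
    linear_combination (-2 : ℝ) * h1 + h2
  -- det L = 1
  have hdetL : L.det = 1 := by
    have htri : L.BlockTriangular OrderDual.toDual := by
      intro i j hij
      have hij' : (i : ℕ) < (j : ℕ) := hij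
      simp only [hL, Matrix.of_apply]
      rw [if_neg (by omega), if_neg (by omega)]
    rw [Matrix.det_of_lowerTriangular L htri]
    have hdiag : ∀ i : Fin (n + 1), L i i = 1 := by
      intro i; simp [hL]
    simp [hdiag]
  have hdetN : N.det = H.det := by
    rw [hN, Matrix.det_mul, Matrix.det_mul, Matrix.det_transpose, hdetL, one_mul, mul_one]
  -- the triangular rearrangement
  set T : Matrix (Fin (n + 1)) (Fin (n + 1)) ℝ :=
    N.submatrix (finRotate (n + 1)) Fin.revPerm with hT
  have hTtri : T.BlockTriangular OrderDual.toDual := by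
    intro i j hij
    have hij' : (i : ℕ) < (j : ℕ) := hij
    have hjn : (j : ℕ) ≤ n := by omega
    have hin : (i : ℕ) < n := by omega
    rw [hT]
    simp only [Matrix.submatrix_apply]
    apply F1
    · rw [coe_finRotate, if_neg (by rw [Fin.ext_iff]; simp; omega)]
      omega
    · rw [coe_finRotate, if_neg (by rw [Fin.ext_iff]; simp; omega)]
      simp only [Fin.revPerm_apply, Fin.val_rev]
      omega
  have hTdiag : ∀ i : Fin (n + 1), T i i = if (i : ℕ) < n then -c else 1 := by
    intro i
    rw [hT]
    simp only [Matrix.submatrix_apply]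
    by_cases hi : (i : ℕ) < n
    · rw [if_pos hi]
      apply F3
      rw [coe_finRotate, if_neg (by rw [Fin.ext_iff]; simp; omega)]
      simp only [Fin.revPerm_apply, Fin.val_rev]
      omega
    · have hlast : i = Fin.last n := by rw [Fin.ext_iff]; simp; omega
      subst hlast
      rw [if_neg hi]
      rw [show (finRotate (n + 1)) (Fin.last n) = 0 from finRotate_last,
        show Fin.revPerm (Fin.last n) = 0 by simp [Fin.ext_iff, Fin.val_rev]]
      exact F2
  have hdetT : T.det = (-c) ^ n := by
    rw [Matrix.det_of_lowerTriangular T hTtri]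
    rw [Finset.prod_congr rfl fun i _ => hTdiag i]
    rw [Fin.prod_univ_castSucc]
    have h1 : ∀ i : Fin n, (if ((Fin.castSucc i : Fin (n + 1)) : ℕ) < n then -c else 1) = -c := by
      intro i; rw [if_pos]; exact i.isLt
    rw [Finset.prod_congr rfl fun i _ => h1 i]
    simp [Fin.val_last]
  -- relate det T and det N via signs
  have hdetT' : T.det = ((Equiv.Perm.sign (Fin.revPerm : Equiv.Perm (Fin (n + 1))) : ℤ) : ℝ) *
      (((Equiv.Perm.sign (finRotate (n + 1)) : ℤ) : ℝ) * N.det) := by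
    have hTT : T = (N.submatrix (finRotate (n + 1)) id).submatrix id Fin.revPerm := by
      rw [hT, Matrix.submatrix_submatrix]
      rfl
    rw [hTT, Matrix.det_permute' Fin.revPerm, Matrix.det_permute (finRotate (n + 1))]
  have hsignσ : Equiv.Perm.sign (finRotate (n + 1)) = (-1 : ℤˣ) ^ n := by
    rw [sign_finRotate (n + 1), Nat.add_sub_cancel]
  have hsignρ : Equiv.Perm.sign (Fin.revPerm : Equiv.Perm (Fin (n + 1))) =
      (-1 : ℤˣ) ^ (n * (n + 1) / 2) := by
    rw [sign_revPerm_aux (n + 1)]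
    congr 1
    simp [Nat.mul_comm]
  rw [← hdetN]
  have hsq : ∀ m : ℕ, ((-1 : ℝ) ^ m) * ((-1 : ℝ) ^ m) = 1 := fun m => by
    rw [← pow_add, ← two_mul, pow_mul]; norm_num
  have h2 : ((((-1 : ℤˣ) ^ (n * (n + 1) / 2) : ℤˣ) : ℤ) : ℝ) = (-1 : ℝ) ^ (n * (n + 1) / 2) := by
    push_cast; rfl
  have h3 : ((((-1 : ℤˣ) ^ n : ℤˣ) : ℤ) : ℝ) = (-1 : ℝ) ^ n := by
    push_cast; rfl
  have hkey : (-1 : ℝ) ^ (n * (n + 1) / 2) * ((-1 : ℝ) ^ n * N.det) = (-c) ^ n := by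
    rw [hsignσ, hsignρ, h2, h3] at hdetT'
    rw [← hdetT', hdetT]
  have hfin : N.det = (-1 : ℝ) ^ (n * (n + 1) / 2) * ((-1 : ℝ) ^ n * (-c) ^ n) := by
    calc N.det = (((-1 : ℝ) ^ (n * (n + 1) / 2) * (-1 : ℝ) ^ (n * (n + 1) / 2)) *
          (((-1 : ℝ) ^ n * (-1 : ℝ) ^ n))) * N.det := by rw [hsq, hsq]; ring
      _ = (-1 : ℝ) ^ (n * (n + 1) / 2) * ((-1 : ℝ) ^ n *
          ((-1 : ℝ) ^ (n * (n + 1) / 2) * ((-1 : ℝ) ^ n * N.det))) := by ring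
      _ = _ := by rw [hkey]
  rw [hfin, show ((-c : ℝ)) ^ n = (-1 : ℝ) ^ n * c ^ n from neg_pow c n]
  rw [show (-1 : ℝ) ^ (n * (n + 1) / 2) * ((-1 : ℝ) ^ n * ((-1 : ℝ) ^ n * c ^ n)) =
    (-1 : ℝ) ^ (n * (n + 1) / 2) * (((-1 : ℝ) ^ n * (-1 : ℝ) ^ n) * c ^ n) from by ring,
    hsq n, one_mul]
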